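/- The graph G = K_{2k−1} + mK₁ (the join of a complete graph on 2k−1 vertices with m isolated vertices) satisfies σ_t(G) = 2kt − t for every t with 4 ≤ t ≤ m, but G does not contain k vertex-disjoint cycles. -/

import Mathlib

/-- `G` contains `k` pairwise vertex-disjoint cycles. -/
def DisjointCycles {V : Type*} (G : SimpleGraph V) (k : ℕ) : Prop :=
  ∃ f : Fin k → Σ v : V, G.Walk v v,
    (∀ i, (f i).2.IsCycle) ∧
    ∀ i j, i ≠ j → ∀ v : V, v ∈ (f i).2.support → v ∉ (f j).2.support

/-- The join `K_a + b·K₁`: a complete graph on `a` vertices joined to `b`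
independent vertices. -/
def joinGraph (a b : ℕ) : SimpleGraph (Fin a ⊕ Fin b) where
  Adj x y := x ≠ y ∧ (x.isLeft ∨ y.isLeft)
  symm := by
    constructor
    rintro x y ⟨h1, h2⟩
    exact ⟨h1.symm, h2.symm⟩
  loopless := by
    constructor
    rintro x ⟨h, -⟩
    exact h rfl

instance (a b : ℕ) : DecidableRel (joinGraph a b).Adj := fun x y =>
  inferInstanceAs (Decidable (x ≠ y ∧ (x.isLeft ∨ y.isLeft)))

lemma left_filter_card (a b : ℕ) :
    (Finset.univ.filter (fun x : Fin a ⊕ Fin b => x.isLeft)).card = a := by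
  have : (Finset.univ.filter (fun x : Fin a ⊕ Fin b => x.isLeft))
      = Finset.univ.image Sum.inl := by
    ext x
    cases x <;> simp
  rw [this, Finset.card_image_of_injective _ Sum.inl_injective]
  simp

lemma degree_inr (a b : ℕ) (v : Fin b) :
    (joinGraph a b).degree (Sum.inr v) = a := by
  rw [← SimpleGraph.card_neighborFinset_eq_degree]
  have : (joinGraph a b).neighborFinset (Sum.inr v)
      = Finset.univ.filter (fun x : Fin a ⊕ Fin b => x.isLeft) := by
    ext x
    cases x <;> rw [SimpleGraph.mem_neighborFinset] <;> simp [joinGraph]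
  rw [this, left_filter_card]

open SimpleGraph in
lemma two_lefts {a b : ℕ} {v : Fin a ⊕ Fin b} {w : (joinGraph a b).Walk v v}
    (hw : w.IsCycle) :
    ∃ p q : Fin a ⊕ Fin b, p ≠ q ∧ p.isLeft ∧ q.isLeft ∧
      p ∈ w.support ∧ q ∈ w.support := by
  have hlen := hw.three_le_length
  have hnd := hw.support_nodup
  clear hw
  cases w with
  | nil => simp at hlen
  | cons h1 w1 =>
    cases w1 with
    | nil => simp at hlen
    | cons h2 w2 =>
      cases w2 with
      | nil => simp at hlen
      | cons h3 w3 =>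
        rename_i x y z
        simp only [Walk.support_cons, List.tail_cons, List.nodup_cons] at hnd
        obtain ⟨hx, hy, -⟩ := hnd
        simp only [List.mem_cons, not_or] at hx
        have hxy : x ≠ y := hx.1
        have hxw : x ∉ w3.support := hx.2
        have hyw : y ∉ w3.support := hy
        have hz : z ∈ w3.support := w3.start_mem_support
        have hv : v ∈ w3.support := w3.end_mem_support
        have hvmem : v ∈ (Walk.cons h1 (Walk.cons h2 (Walk.cons h3 w3))).support := by
          simp
        have hxmem : x ∈ (Walk.cons h1 (Walk.cons h2 (Walk.cons h3 w3))).support := by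
          simp
        have hymem : y ∈ (Walk.cons h1 (Walk.cons h2 (Walk.cons h3 w3))).support := by
          simp
        have hzmem : z ∈ (Walk.cons h1 (Walk.cons h2 (Walk.cons h3 w3))).support := by
          simp [hz]
        rcases h1.2 with hL1 | hL1
        · rcases h2.2 with hL2 | hL2
          · exact ⟨v, x, h1.1, hL1, hL2, hvmem, hxmem⟩
          · exact ⟨v, y, fun h => hyw (h ▸ hv), hL1, hL2, hvmem, hymem⟩
        · rcases h2.2 with hL2 | hL2
          · rcases h3.2 with hL3 | hL3
            · exact ⟨x, y, hxy, hL1, hL3, hxmem, hymem⟩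
            · exact ⟨x, z, fun h => hxw (h ▸ hz), hL1, hL3, hxmem, hzmem⟩
          · exact ⟨x, y, hxy, hL1, hL2, hxmem, hymem⟩

/-- Sharpness example: `G = K_{2k-1} + m·K₁` satisfies `σ_t(G) = 2kt - t` for every
`4 ≤ t ≤ m` (there is an independent `t`-set, and every independent `t`-set has degree
sum exactly `2kt - t`), yet `G` has no `k` disjoint cycles. -/
theorem sharpness (k m : ℕ) (hk : 2 ≤ k) (hm : 4 ≤ m) :
    (∀ t : ℕ, 4 ≤ t → t ≤ m →
      (∃ s : Finset (Fin (2 * k - 1) ⊕ Fin m), s.card = t ∧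
        (∀ x ∈ s, ∀ y ∈ s, x ≠ y → ¬ (joinGraph (2 * k - 1) m).Adj x y)) ∧
      (∀ s : Finset (Fin (2 * k - 1) ⊕ Fin m), s.card = t →
        (∀ x ∈ s, ∀ y ∈ s, x ≠ y → ¬ (joinGraph (2 * k - 1) m).Adj x y) →
        ∑ v ∈ s, (joinGraph (2 * k - 1) m).degree v = 2 * k * t - t)) ∧
    ¬ DisjointCycles (joinGraph (2 * k - 1) m) k := by
  constructor
  · intro t ht4 htm
    constructor
    · obtain ⟨s0, -, hs0card⟩ :=
        Finset.exists_subset_card_eq (s := (Finset.univ : Finset (Fin m))) (n := t) (by simpa using htm)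
      refine ⟨s0.image Sum.inr, ?_, ?_⟩
      · rw [Finset.card_image_of_injective _ Sum.inr_injective, hs0card]
      · intro x hx y hy hxy hadj
        simp only [Finset.mem_image] at hx hy
        obtain ⟨x', -, rfl⟩ := hx
        obtain ⟨y', -, rfl⟩ := hy
        rcases hadj.2 with h | h <;> simp at h
    · intro s hcard hind
      have hall : ∀ x ∈ s, ∃ v : Fin m, x = Sum.inr v := by
        intro x hx
        cases x with
        | inr v => exact ⟨v, rfl⟩
        | inl l =>
          exfalso
          obtain ⟨y, hy, hne⟩ :=
            Finset.exists_mem_ne (s := s) (by omega) (Sum.inl l)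
          exact hind _ hx y hy (Ne.symm hne) ⟨Ne.symm hne, Or.inl rfl⟩
      have hdeg : ∀ x ∈ s, (joinGraph (2 * k - 1) m).degree x = 2 * k - 1 := by
        intro x hx
        obtain ⟨v, rfl⟩ := hall x hx
        exact degree_inr _ _ v
      rw [Finset.sum_congr rfl hdeg, Finset.sum_const, hcard, smul_eq_mul,
        mul_comm, Nat.sub_mul, one_mul]
  · rintro ⟨f, hcyc, hdisj⟩
    set S : Fin k → Finset (Fin (2 * k - 1) ⊕ Fin m) :=
      fun i => (f i).2.support.toFinset.filter (fun x => x.isLeft) with hS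
    have h2 : ∀ i, 2 ≤ (S i).card := by
      intro i
      obtain ⟨p, q, hpq, hp, hq, hpm, hqm⟩ := two_lefts (hcyc i)
      have hsub : {p, q} ⊆ S i := by
        intro x hx
        simp only [Finset.mem_insert, Finset.mem_singleton] at hx
        rcases hx with rfl | rfl <;>
          simp [hS, List.mem_toFinset, hpm, hqm, hp, hq]
      calc 2 = ({p, q} : Finset _).card := by
            rw [Finset.card_insert_of_notMem (by simpa using hpq),
              Finset.card_singleton]
        _ ≤ _ := Finset.card_le_card hsub
    have hdisjS : ∀ i j, i ≠ j → Disjoint (S i) (S j) := by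
      intro i j hij
      rw [Finset.disjoint_left]
      intro x hxi hxj
      simp only [hS, Finset.mem_filter, List.mem_toFinset] at hxi hxj
      exact hdisj i j hij x hxi.1 hxj.1
    have hunion : (Finset.univ.biUnion S).card = ∑ i, (S i).card :=
      Finset.card_biUnion (fun i _ j _ h => hdisjS i j h)
    have hsub : Finset.univ.biUnion S
        ⊆ Finset.univ.filter (fun x => x.isLeft) := by
      intro x hx
      simp only [Finset.mem_biUnion, hS, Finset.mem_filter,
        List.mem_toFinset, Finset.mem_univ, true_and] at hx ⊢
      obtain ⟨i, -, hi⟩ := hx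
      exact hi
    have hle : ∑ i, (S i).card ≤ 2 * k - 1 := by
      have h := Finset.card_le_card hsub
      rw [hunion, left_filter_card] at h
      exact h
    have hge : 2 * k ≤ ∑ i, (S i).card := by
      calc 2 * k = ∑ _i : Fin k, 2 := by simp [mul_comm]
        _ ≤ _ := Finset.sum_le_sum (fun i _ => h2 i)
    omega
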